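/- Let M = [[u c, (φ-1) c], [-(1+η) k ((ε-1)/ε)^(η/(1+η)), δ]] with c > 0, δ > 0, k > 0, η > 0, ε > 1, φ ≥ 0, and u > (1+η)(k/δ)((ε-1)/ε)^(η/(1+η)). Then tr(M) > 0 and det(M) > 0, so both eigenvalues of M have positive real part. -/

import Mathlib

lemma quad_re_pos {T D : ℝ} (hT : 0 < T) (hD : 0 < D) (μ : ℂ)
    (h : μ ^ 2 - (T : ℂ) * μ + (D : ℂ) = 0) : 0 < μ.re := by
  have h1 := congrArg Complex.re h
  have h2 := congrArg Complex.im h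
  simp [pow_two, Complex.mul_re, Complex.mul_im] at h1 h2
  by_cases hy : μ.im = 0
  · rw [hy] at h1
    by_contra hx
    push_neg at hx
    nlinarith [sq_nonneg μ.re, mul_nonneg (neg_nonneg.2 hx) hT.le]
  · have h3 : μ.im * (2 * μ.re - T) = 0 := by ring_nf; ring_nf at h2; linarith
    rcases mul_eq_zero.mp h3 with h | h
    · exact absurd h hy
    · linarith

/-- WUNK model with government spending, normal times (any φ ≥ 0):
positive trace and determinant, so both eigenvalues have positive
real part (source). -/
theorem stmt_9 (c δ k η ε u φ : ℝ) (hc : 0 < c) (hδ : 0 < δ) (hk : 0 < k)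
    (hη : 0 < η) (hε : 1 < ε) (hφ : 0 ≤ φ)
    (hu : (1 + η) * (k / δ) * ((ε - 1) / ε) ^ (η / (1 + η)) < u) :
    let M : Matrix (Fin 2) (Fin 2) ℝ :=
      !![u * c, (φ - 1) * c; -((1 + η) * k * ((ε - 1) / ε) ^ (η / (1 + η))), δ]
    0 < Matrix.trace M ∧ 0 < M.det ∧
      ∀ μ : ℂ, μ ^ 2 - (Matrix.trace M : ℝ) * μ + (M.det : ℝ) = 0 → 0 < μ.re := by
  intro M
  set r : ℝ := ((ε - 1) / ε) ^ (η / (1 + η)) with hrdef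
  have hr : 0 < r :=
    Real.rpow_pos_of_pos (div_pos (by linarith) (by linarith)) _
  have hA : 0 < (1 + η) * k * r := by positivity
  have huδ : (1 + η) * k * r < u * δ := by
    have h1 : (1 + η) * (k / δ) * r * δ = (1 + η) * k * r := by
      field_simp
    nlinarith [mul_lt_mul_of_pos_right hu hδ]
  have hu0 : 0 < u := by
    have : 0 < (1 + η) * (k / δ) * r := by positivity
    linarith
  have htr : Matrix.trace M = u * c + δ := by
    simp [M, Matrix.trace_fin_two_of]
  have hdet : M.det = u * c * δ + (φ - 1) * c * ((1 + η) * k * r) := by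
    simp [M, Matrix.det_fin_two_of]
    exact Or.inl (Or.inl hrdef.symm)
  have htrpos : 0 < Matrix.trace M := by
    rw [htr]; positivity
  have hdetpos : 0 < M.det := by
    rw [hdet]
    nlinarith [mul_lt_mul_of_pos_left huδ hc, mul_nonneg (mul_nonneg hφ hc.le) hA.le]
  refine ⟨htrpos, hdetpos, fun μ hμ => quad_re_pos htrpos hdetpos μ hμ⟩
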